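/- arXiv:2502.00258 — 2 statements merged into one kernel-verified Lean document; each statement's English description precedes it below -/
import Mathlib

section
/- Let W0 in R^d have all coordinates nonzero. Then Reg_{W0}(W) = 0 and Reg_{2:4}(W) = 0 (applied blockwise to each consecutive block of 4 coordinates, with d divisible by 4) if and only if every 4-block of W has at most 2 nonzero entries and every nonzero coordinate of W equals the corresponding coordinate of W0. -/
/-- The 2:4 mask-selection regularizer on `ℝ^4`. -/
noncomputable def Reg24 (w : Fin 4 → ℝ) : ℝ :=
  |w 0| * |w 1| * |w 2| + |w 1| * |w 2| * |w 3| +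
  |w 2| * |w 3| * |w 0| + |w 3| * |w 0| * |w 1|

lemma reg24_zero_iff (w : Fin 4 → ℝ) :
    Reg24 w = 0 ↔ ((Finset.univ : Finset (Fin 4)).filter (fun i => w i ≠ 0)).card ≤ 2 := by
  classical
  rw [Finset.card_filter, Fin.sum_univ_four]
  unfold Reg24
  by_cases h0 : w 0 = 0 <;> by_cases h1 : w 1 = 0 <;> by_cases h2 : w 2 = 0 <;>
    by_cases h3 : w 3 = 0 <;>
    simp [h0, h1, h2, h3] <;>
    nlinarith [mul_pos (mul_pos (abs_pos.mpr h0) (abs_pos.mpr h1)) (abs_pos.mpr h2),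
      mul_nonneg (mul_nonneg (abs_nonneg (w 1)) (abs_nonneg (w 2))) (abs_nonneg (w 3)),
      mul_nonneg (mul_nonneg (abs_nonneg (w 2)) (abs_nonneg (w 3))) (abs_nonneg (w 0)),
      mul_nonneg (mul_nonneg (abs_nonneg (w 3)) (abs_nonneg (w 0))) (abs_nonneg (w 1))]

/-- Both regularizers vanish iff every 4-block of `W` has at most 2 nonzero entries and
every nonzero coordinate of `W` equals the corresponding coordinate of `W0`.
Here `W, W0 : Fin n → Fin 4 → ℝ` encodes a vector in `ℝ^d` with `d = 4n` split into
consecutive blocks of 4. -/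
theorem both_regs_zero_iff (n : ℕ) (W W0 : Fin n → Fin 4 → ℝ)
    (hW0 : ∀ b i, W0 b i ≠ 0) :
    ((∑ b, ∑ i, (W b i * (W b i - W0 b i) / W0 b i) ^ 2) = 0 ∧
      (∑ b, Reg24 (W b)) = 0) ↔
    ((∀ b, ((Finset.univ : Finset (Fin 4)).filter (fun i => W b i ≠ 0)).card ≤ 2) ∧
      (∀ b i, W b i ≠ 0 → W b i = W0 b i)) := by
  classical
  have h1 : (∑ b, ∑ i, (W b i * (W b i - W0 b i) / W0 b i) ^ 2) = 0 ↔
      ∀ b i, W b i ≠ 0 → W b i = W0 b i := by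
    rw [Finset.sum_eq_zero_iff_of_nonneg (fun b _ => Finset.sum_nonneg fun i _ => sq_nonneg _)]
    constructor
    · intro h b i hne
      have := h b (Finset.mem_univ b)
      rw [Finset.sum_eq_zero_iff_of_nonneg (fun i _ => sq_nonneg _)] at this
      have h2 := this i (Finset.mem_univ i)
      rw [sq_eq_zero_iff, div_eq_zero_iff, mul_eq_zero] at h2
      rcases h2 with (h2 | h2) | h2
      · exact absurd h2 hne
      · linarith
      · exact absurd h2 (hW0 b i)
    · intro h b _
      rw [Finset.sum_eq_zero_iff_of_nonneg (fun i _ => sq_nonneg _)]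
      intro i _
      rw [sq_eq_zero_iff, div_eq_zero_iff, mul_eq_zero]
      by_cases hne : W b i = 0
      · exact Or.inl (Or.inl hne)
      · exact Or.inl (Or.inr (by linarith [h b i hne]))
  have h2 : (∑ b, Reg24 (W b)) = 0 ↔
      ∀ b, ((Finset.univ : Finset (Fin 4)).filter (fun i => W b i ≠ 0)).card ≤ 2 := by
    rw [Finset.sum_eq_zero_iff_of_nonneg (fun b _ => by unfold Reg24; positivity)]
    constructor
    · intro h b; exact (reg24_zero_iff (W b)).mp (h b (Finset.mem_univ b))
    · intro h b _; exact (reg24_zero_iff (W b)).mpr (h b)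
  rw [h1, h2, and_comm]
end

section
/- Let y in R^4 and let z = sorted(|y|) be the vector of absolute values of y sorted in descending order. Then for any w in R^4, the value (1/2)*||w - y||^2 + lambda*Reg_{2:4}(w) equals (1/2)*||w' - z||^2 + lambda*Reg_{2:4}(w'), where w' is obtained from w by taking absolute values adjusted for the signs of y and applying the same sorting permutation, provided sign(w_i) = sign(y_i) for all i with y_i ≠ 0. Consequently, the minimum of the proximal objective over R^4 equals the minimum of (1/2)*||v - z||^2 + lambda*Reg_{2:4}(v) over v in R^4 with nonnegative coordinates. -/
lemma reg24_eq (u : Fin 4 → ℝ) :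
    Reg24 u = ∑ i, ∏ j ∈ Finset.univ.erase i, |u j| := by
  have h0 : Finset.univ.erase (0 : Fin 4) = {1, 2, 3} := by decide
  have h1 : Finset.univ.erase (1 : Fin 4) = {0, 2, 3} := by decide
  have h2 : Finset.univ.erase (2 : Fin 4) = {0, 1, 3} := by decide
  have h3 : Finset.univ.erase (3 : Fin 4) = {0, 1, 2} := by decide
  simp [Reg24, Fin.sum_univ_four, h0, h1, h2, h3, Finset.prod_insert,
    Finset.mem_insert, Finset.mem_singleton]
  ring

lemma reg24_perm (u : Fin 4 → ℝ) (σ : Equiv.Perm (Fin 4)) :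
    Reg24 (fun i => u (σ i)) = Reg24 u := by
  rw [reg24_eq, reg24_eq]
  rw [← Equiv.sum_comp σ (fun i => ∏ j ∈ Finset.univ.erase i, |u j|)]
  refine Finset.sum_congr rfl fun i _ => ?_
  refine Finset.prod_nbij' σ σ.symm ?_ ?_ ?_ ?_ ?_
  · intro a ha
    simp only [Finset.mem_erase, Finset.mem_univ, and_true] at ha ⊢
    exact fun h => ha (σ.injective h)
  · intro a ha
    simp only [Finset.mem_erase, Finset.mem_univ, and_true] at ha ⊢
    intro h
    exact ha (by rw [← h, Equiv.apply_symm_apply])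
  · intro a _; exact σ.symm_apply_apply a
  · intro a _; exact σ.apply_symm_apply a
  · intro a _; rfl

lemma reg24_abs (u : Fin 4 → ℝ) : Reg24 (fun i => |u i|) = Reg24 u := by
  simp [Reg24, abs_abs]

lemma sq_abs_sub_le (a b : ℝ) : (|a| - |b|) ^ 2 ≤ (a - b) ^ 2 := by
  have h := abs_abs_sub_abs_le_abs_sub a b
  calc (|a| - |b|) ^ 2 = |(|a| - |b|)| ^ 2 := (sq_abs _).symm
    _ ≤ |a - b| ^ 2 := pow_le_pow_left₀ (abs_nonneg _) h 2
    _ = (a - b) ^ 2 := sq_abs _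

lemma sq_sign_eq {a b : ℝ} (hb : b ≠ 0) (hs : Real.sign a = Real.sign b) :
    (a - b) ^ 2 = (|a| - |b|) ^ 2 := by
  rcases lt_or_gt_of_ne hb with h | h
  · have ha : a < 0 := by
      rcases lt_trichotomy a 0 with h' | h' | h'
      · exact h'
      · rw [h', Real.sign_zero, Real.sign_of_neg h] at hs; norm_num at hs
      · rw [Real.sign_of_pos h', Real.sign_of_neg h] at hs; norm_num at hs
    rw [abs_of_neg ha, abs_of_neg h]; ring
  · have ha : 0 < a := by
      rcases lt_trichotomy a 0 with h' | h' | h'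
      · rw [Real.sign_of_neg h', Real.sign_of_pos h] at hs; norm_num at hs
      · rw [h', Real.sign_zero, Real.sign_of_pos h] at hs; norm_num at hs
      · exact h'
    rw [abs_of_pos ha, abs_of_pos h]

/-- Reduction of the proximal problem to sorted nonnegative data: with
`z = sorted(|y|)` (descending, obtained via the permutation `σ`), the objective
at any `w` whose signs agree with those of `y` equals the objective at
`w' = (|w (σ ·)|)` for the data `z`; consequently the minimum over `ℝ^4`
equals the minimum of the `z`-objective over the nonnegative orthant. -/
theorem prox_reduction_to_sorted_nonneg (y : Fin 4 → ℝ) (lam : ℝ)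
    (σ : Equiv.Perm (Fin 4)) (z : Fin 4 → ℝ)
    (hz : ∀ i, z i = |y (σ i)|)
    (hsorted : ∀ i j : Fin 4, i ≤ j → z j ≤ z i) :
    (∀ w : Fin 4 → ℝ, (∀ i, y i ≠ 0 → Real.sign (w i) = Real.sign (y i)) →
        (1/2) * (∑ i, (w i - y i) ^ 2) + lam * Reg24 w
          = (1/2) * (∑ i, (|w (σ i)| - z i) ^ 2) + lam * Reg24 (fun i => |w (σ i)|)) ∧
    sInf (Set.range fun w : Fin 4 → ℝ => (1/2) * (∑ i, (w i - y i) ^ 2) + lam * Reg24 w)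
      = sInf ((fun v : Fin 4 → ℝ => (1/2) * (∑ i, (v i - z i) ^ 2) + lam * Reg24 v) ''
          {v | ∀ i, 0 ≤ v i}) := by
  set F : (Fin 4 → ℝ) → ℝ :=
    fun w => (1/2) * (∑ i, (w i - y i) ^ 2) + lam * Reg24 w with hF
  set G : (Fin 4 → ℝ) → ℝ :=
    fun v => (1/2) * (∑ i, (v i - z i) ^ 2) + lam * Reg24 v with hG
  -- the regularizer part is always invariant
  have hreg : ∀ w : Fin 4 → ℝ, Reg24 (fun i => |w (σ i)|) = Reg24 w := by
    intro w
    rw [reg24_abs (fun i => w (σ i)), reg24_perm w σ]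
  constructor
  · intro w hw
    have hsum : ∑ i, (w i - y i) ^ 2 = ∑ i, (|w (σ i)| - z i) ^ 2 := by
      rw [← Equiv.sum_comp σ (fun i => (w i - y i) ^ 2)]
      refine Finset.sum_congr rfl fun i _ => ?_
      rw [hz i]
      by_cases hb : y (σ i) = 0
      · simp [hb, sq_abs]
      · exact sq_sign_eq hb (hw (σ i) hb)
    rw [hsum, hreg]
  · -- Claim A : G '' nonneg ⊆ range F
    have claimA : (G '' {v | ∀ i, 0 ≤ v i}) ⊆ Set.range F := by
      rintro t ⟨v, hv, rfl⟩
      refine ⟨fun i => if y i < 0 then -v (σ.symm i) else v (σ.symm i), ?_⟩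
      have hregw : Reg24 (fun i => if y i < 0 then -v (σ.symm i) else v (σ.symm i))
          = Reg24 v := by
        have h1 : Reg24 (fun i => if y i < 0 then -v (σ.symm i) else v (σ.symm i))
            = Reg24 (fun i => v (σ.symm i)) := by
          simp only [Reg24, apply_ite abs, abs_neg, ite_self]
        rw [h1, reg24_perm v σ.symm]
      have hsum : ∑ i, ((if y i < 0 then -v (σ.symm i) else v (σ.symm i)) - y i) ^ 2
          = ∑ i, (v i - z i) ^ 2 := by
        have step : ∀ i, ((if y i < 0 then -v (σ.symm i) else v (σ.symm i)) - y i) ^ 2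
            = (v (σ.symm i) - |y i|) ^ 2 := by
          intro i
          by_cases h : y i < 0
          · rw [if_pos h, abs_of_neg h]; ring
          · rw [if_neg h, abs_of_nonneg (not_lt.mp h)]
        rw [Finset.sum_congr rfl fun i _ => step i,
          ← Equiv.sum_comp σ (fun i => (v (σ.symm i) - |y i|) ^ 2)]
        refine Finset.sum_congr rfl fun j _ => ?_
        rw [Equiv.symm_apply_apply, hz j]
      simp only [hF, hG, hsum, hregw]
    -- Claim B : every value of F dominates some value of G on the orthant
    have claimB : ∀ w : Fin 4 → ℝ, ∃ t ∈ G '' {v | ∀ i, 0 ≤ v i}, t ≤ F w := by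
      intro w
      refine ⟨G (fun j => |w (σ j)|), ⟨fun j => |w (σ j)|, fun j => abs_nonneg _, rfl⟩, ?_⟩
      have hsum : ∑ i, (|w (σ i)| - z i) ^ 2 ≤ ∑ i, (w i - y i) ^ 2 := by
        rw [← Equiv.sum_comp σ (fun i => (w i - y i) ^ 2)]
        refine Finset.sum_le_sum fun i _ => ?_
        rw [hz i]
        exact sq_abs_sub_le _ _
      simp only [hF, hG, hreg]
      have : (1:ℝ)/2 * ∑ i, (|w (σ i)| - z i) ^ 2 ≤ (1/2) * ∑ i, (w i - y i) ^ 2 := by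
        linarith
      linarith
    have hTne : (G '' {v | ∀ i, 0 ≤ v i}).Nonempty :=
      ⟨G 0, ⟨0, fun i => le_refl 0, rfl⟩⟩
    by_cases hbdd : BddBelow (G '' {v | ∀ i, 0 ≤ v i})
    · have hSbdd : BddBelow (Set.range F) := by
        obtain ⟨b, hb⟩ := hbdd
        refine ⟨b, ?_⟩
        rintro x ⟨w, rfl⟩
        obtain ⟨t, ht, hle⟩ := claimB w
        exact (hb ht).trans hle
      refine le_antisymm (csInf_le_csInf hSbdd hTne claimA) ?_
      refine le_csInf ⟨F 0, 0, rfl⟩ ?_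
      rintro x ⟨w, rfl⟩
      obtain ⟨t, ht, hle⟩ := claimB w
      exact (csInf_le hbdd ht).trans hle
    · have hS : ¬BddBelow (Set.range F) := fun h => hbdd (h.mono claimA)
      rw [Real.sInf_of_not_bddBelow hS, Real.sInf_of_not_bddBelow hbdd]
end
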